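/- Let A : ℝ² \ {0} → ℝ be a solution of the PDE ‖u‖²(v·∇_u)A + 3A(u·v) = 0 holding for all v ∈ ℝ², where the equation is required for all u ≠ 0. Then A(u) = α‖u‖⁻³ for some constant α (on a connected domain). -/

import Mathlib

/-- Standard inner product on ℝ². -/
def dot (a b : ℝ × ℝ) : ℝ := a.1 * b.1 + a.2 * b.2

/-- Euclidean norm on ℝ². -/
noncomputable def nrm (a : ℝ × ℝ) : ℝ := Real.sqrt (a.1 ^ 2 + a.2 ^ 2)

lemma q_pos {u : ℝ × ℝ} (hu : u ≠ 0) : 0 < u.1 ^ 2 + u.2 ^ 2 := by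
  have : u.1 ≠ 0 ∨ u.2 ≠ 0 := by
    by_contra h
    push_neg at h
    exact hu (Prod.ext h.1 h.2)
  rcases this with h | h <;> positivity

lemma nrm_pos {u : ℝ × ℝ} (hu : u ≠ 0) : 0 < nrm u :=
  Real.sqrt_pos.mpr (q_pos hu)

lemma nrm_sq {u : ℝ × ℝ} : nrm u ^ 2 = u.1 ^ 2 + u.2 ^ 2 :=
  Real.sq_sqrt (by positivity)

theorem stmt_13 (A : ℝ × ℝ → ℝ)
    (hdiff : ∀ u : ℝ × ℝ, u ≠ 0 → DifferentiableAt ℝ A u)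
    (hPDE : ∀ u : ℝ × ℝ, u ≠ 0 → ∀ v : ℝ × ℝ,
      (nrm u) ^ 2 * fderiv ℝ A u v + 3 * A u * dot u v = 0) :
    ∃ α : ℝ, ∀ u : ℝ × ℝ, u ≠ 0 → A u = α * (nrm u) ^ (-3 : ℤ) := by
  set B : ℝ × ℝ → ℝ := fun u => A u * (u.1 ^ 2 + u.2 ^ 2) ^ ((3 : ℝ) / 2) with hBdef
  -- B has zero derivative on the punctured plane
  have hB : ∀ u : ℝ × ℝ, u ≠ 0 → HasFDerivAt B (0 : ℝ × ℝ →L[ℝ] ℝ) u := by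
    intro u hu
    have hq : (0 : ℝ) < u.1 ^ 2 + u.2 ^ 2 := q_pos hu
    have h1 := ((hasFDerivAt_fst (𝕜 := ℝ) (p := u)).mul hasFDerivAt_fst).add
      ((hasFDerivAt_snd (𝕜 := ℝ) (p := u)).mul hasFDerivAt_snd)
    have h1' : HasFDerivAt (fun w : ℝ × ℝ => w.1 ^ 2 + w.2 ^ 2)
        ((u.1 • ContinuousLinearMap.fst ℝ ℝ ℝ + u.1 • ContinuousLinearMap.fst ℝ ℝ ℝ)
          + (u.2 • ContinuousLinearMap.snd ℝ ℝ ℝ + u.2 • ContinuousLinearMap.snd ℝ ℝ ℝ)) u := by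
      exact h1.congr_of_eventuallyEq (Filter.Eventually.of_forall fun w => by simp [pow_two])
    have h2 := h1'.rpow_const (p := (3 : ℝ) / 2) (Or.inl hq.ne')
    have h3 := ((hdiff u hu).hasFDerivAt).mul h2
    refine h3.congr_fderiv ?_
    refine ContinuousLinearMap.ext fun v => ?_
    have hpde := hPDE u hu v
    rw [nrm_sq] at hpde
    have hsplit : ((u.1 ^ 2 + u.2 ^ 2) : ℝ) ^ ((3 : ℝ) / 2)
        = (u.1 ^ 2 + u.2 ^ 2) ^ ((3 : ℝ) / 2 - 1) * (u.1 ^ 2 + u.2 ^ 2) := by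
      rw [show (3 : ℝ) / 2 = (3 / 2 - 1) + 1 by ring, Real.rpow_add hq, Real.rpow_one]
      ring_nf
    simp only [ContinuousLinearMap.zero_apply, ContinuousLinearMap.add_apply,
      ContinuousLinearMap.smul_apply, ContinuousLinearMap.coe_smul', Pi.smul_apply,
      ContinuousLinearMap.coe_fst', ContinuousLinearMap.coe_snd', smul_eq_mul]
    rw [hsplit]
    simp only [dot] at hpde
    linear_combination ((u.1 ^ 2 + u.2 ^ 2) ^ ((3 : ℝ) / 2 - 1)) * hpde
  -- B is constant on the connected set {0}ᶜ
  have hconn : IsConnected ({(0 : ℝ × ℝ)}ᶜ : Set (ℝ × ℝ)) := by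
    apply isConnected_compl_singleton_of_one_lt_rank
    simp
    norm_num
  haveI : PreconnectedSpace ({(0 : ℝ × ℝ)}ᶜ : Set (ℝ × ℝ)) :=
    Subtype.preconnectedSpace hconn.isPreconnected
  have hx0 : ((1, 0) : ℝ × ℝ) ≠ 0 := by simp [Prod.ext_iff]
  set c : ℝ := B (1, 0) with hc
  have hconst : ∀ u : ℝ × ℝ, u ≠ 0 → B u = c := by
    set S : Set (ℝ × ℝ) := {(0 : ℝ × ℝ)}ᶜ with hS
    set T : Set S := {x : S | B x.val = c} with hT
    have hmem : ∀ u : ℝ × ℝ, u ≠ 0 → u ∈ S := fun u hu => by simp [hS, hu]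
    have hclopen : IsClopen T := by
      constructor
      · -- closed
        have hcont : Continuous (fun x : S => B x.val) := by
          rw [continuous_iff_continuousAt]
          intro x
          exact ((hB x.val x.prop).differentiableAt.continuousAt).comp
            continuous_subtype_val.continuousAt
        exact isClosed_singleton.preimage hcont
      · -- open
        rw [isOpen_iff_mem_nhds]
        intro x hx
        have hxne : (x : ℝ × ℝ) ≠ 0 := x.prop
        obtain ⟨ε, hε, hball⟩ := Metric.isOpen_iff.mp isOpen_compl_singleton x.val hxne
        have hballconst : ∀ y ∈ Metric.ball (x : ℝ × ℝ) ε, B y = B x := by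
          intro y hy
          refine (convex_ball _ _).is_const_of_fderivWithin_eq_zero
            (fun z hz => ((hB z (hball hz)).differentiableAt).differentiableWithinAt)
            (fun z hz => ?_) hy (Metric.mem_ball_self hε)
          rw [fderivWithin_eq_fderiv (Metric.isOpen_ball.uniqueDiffOn z hz)
            ((hB z (hball hz)).differentiableAt)]
          exact (hB z (hball hz)).fderiv
        have : (Subtype.val ⁻¹' Metric.ball (x : ℝ × ℝ) ε : Set S) ⊆ T := by
          intro y hy
          simp only [hT, Set.mem_setOf_eq]
          rw [hballconst y.val hy, hx]
        exact Filter.mem_of_superset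
          ((Metric.isOpen_ball.preimage continuous_subtype_val).mem_nhds
            (by simpa using hε)) this
    have hTuniv : T = Set.univ := by
      rcases isClopen_iff.mp hclopen with h | h
      · exfalso
        have : (⟨(1, 0), hmem _ hx0⟩ : S) ∈ T := by simp [hT, hc]
        rw [h] at this
        exact this
      · exact h
    intro u hu
    have : (⟨u, hmem u hu⟩ : S) ∈ T := hTuniv ▸ Set.mem_univ _
    exact this
  -- conclude
  refine ⟨c, fun u hu => ?_⟩
  have hBu := hconst u hu
  have hn : 0 < nrm u := nrm_pos hu
  have hq : (0:ℝ) < u.1 ^ 2 + u.2 ^ 2 := q_pos hu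
  have hcube : ((u.1 ^ 2 + u.2 ^ 2 : ℝ)) ^ ((3:ℝ)/2) = nrm u ^ (3:ℕ) := by
    rw [nrm, Real.sqrt_eq_rpow, ← Real.rpow_natCast _ 3, ← Real.rpow_mul hq.le]
    norm_num
  have hBu' : A u * nrm u ^ (3:ℕ) = c := by rw [← hcube]; exact hBu
  have h3 : nrm u ^ (-3:ℤ) = (nrm u ^ (3:ℕ))⁻¹ := by
    rw [zpow_neg]
    norm_cast
  have hne : (nrm u ^ (3 : ℕ)) ≠ 0 := by positivity
  rw [h3]
  exact (eq_mul_inv_iff_mul_eq₀ hne).mpr hBu'
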